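/- Let (X, ‖·‖) be a complex normed vector space and [·,·] : X × X → ℂ a map satisfying: additivity and ℂ-homogeneity in the first argument, [x,λy] = conj(λ)[x,y] for all λ ∈ ℂ, |[x,y]| ≤ ‖x‖·‖y‖, and [x,x] = ‖x‖² for all x. If x, y ∈ X satisfy [y,x] = 0, then ‖x + λy‖ ≥ ‖x‖ for every λ ∈ ℂ; that is, s.i.p. orthogonality implies Birkhoff orthogonality. -/

import Mathlib

/-- In an s.i.p. space representing the norm, s.i.p. orthogonality implies
Birkhoff orthogonality: if `[y,x] = 0` then `‖x + λy‖ ≥ ‖x‖` for all `λ ∈ ℂ`. -/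
theorem sip_orthogonal_implies_birkhoff {X : Type*} [NormedAddCommGroup X]
    [NormedSpace ℂ X] (f : X → X → ℂ)
    (hadd : ∀ x y z : X, f (x + y) z = f x z + f y z)
    (hsmul : ∀ (l : ℂ) (x y : X), f (l • x) y = l * f x y)
    (hconj : ∀ (l : ℂ) (x y : X), f x (l • y) = (starRingEnd ℂ) l * f x y)
    (hcs : ∀ x y : X, ‖f x y‖ ≤ ‖x‖ * ‖y‖)
    (hnorm : ∀ x : X, f x x = (‖x‖ : ℂ) ^ 2)
    (x y : X) (hxy : f y x = 0) :
    ∀ l : ℂ, ‖x‖ ≤ ‖x + l • y‖ := by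
  intro l
  have key : f (x + l • y) x = (‖x‖ : ℂ) ^ 2 := by
    rw [hadd, hsmul, hxy, hnorm]; ring
  have h1 : ‖x‖ ^ 2 ≤ ‖x + l • y‖ * ‖x‖ := by
    have := hcs (x + l • y) x
    rw [key] at this
    have habs : ‖((‖x‖ : ℂ) ^ 2)‖ = ‖x‖ ^ 2 := by
      rw [norm_pow, Complex.norm_real, Real.norm_of_nonneg (norm_nonneg x)]
    rwa [habs] at this
  rcases eq_or_lt_of_le (norm_nonneg x) with h0 | h0
  · rw [← h0]; exact norm_nonneg _
  · nlinarith [h1]
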